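/- Let V be a finite linearly ordered set, p : V → [0,1], and let Ω = {0,1}^V carry the product probability measure under which each coordinate ω_e equals 1 independently with probability p_e. Let Q : Ω → 2^V be a map such that for every e ∈ V, membership of e in Q(ω) depends only on the coordinates ω_f for f < e (i.e., if ω and ω' agree on all coordinates f < e, then e ∈ Q(ω) iff e ∈ Q(ω')). Then E[ |{e ∈ Q(ω) : ω_e = 1}| ] = E[ Σ_{e ∈ Q(ω)} p_e ]. -/

import Mathlib

open Finset

/-- The probability mass of the outcome `ω` in the product of independent
Bernoulli distributions where coordinate `e` equals `true` with probability `p e`. -/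
noncomputable def prodWeight {V : Type*} [Fintype V] (p : V → ℝ) (ω : V → Bool) : ℝ :=
  ∏ e, (if ω e then p e else 1 - p e)

section Aux

variable {V : Type*} [Fintype V] [DecidableEq V]

lemma flip_involutive (e : V) :
    Function.Involutive (fun ω : V → Bool => Function.update ω e (!ω e)) := by
  intro ω
  ext f
  rcases eq_or_ne f e with rfl | h
  · simp
  · simp [Function.update_of_ne h]

lemma key_coord (p : V → ℝ) (e : V) (g : (V → Bool) → ℝ)
    (hg : ∀ ω b, g (Function.update ω e b) = g ω) :
    ∑ ω : V → Bool, prodWeight p ω * ((if ω e then (1:ℝ) else 0) * g ω)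
      = p e * ∑ ω : V → Bool, prodWeight p ω * g ω := by
  classical
  set c : (V → Bool) → ℝ := fun ω => ∏ f ∈ univ.erase e, (if ω f then p f else 1 - p f)
    with hc
  have hw : ∀ ω : V → Bool, prodWeight p ω = (if ω e then p e else 1 - p e) * c ω := by
    intro ω
    rw [prodWeight, ← Finset.mul_prod_erase univ _ (mem_univ e)]
  have hcflip : ∀ (ω : V → Bool) (b : Bool), c (Function.update ω e b) = c ω := by
    intro ω b
    refine Finset.prod_congr rfl fun f hf => ?_
    rw [Function.update_of_ne (Finset.ne_of_mem_erase hf)]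
  set T : ℝ := ∑ ω : V → Bool, (if ω e then 0 else c ω * g ω) with hT
  have h1 : ∑ ω : V → Bool, (if ω e then c ω * g ω else 0) = T := by
    rw [hT]
    refine Fintype.sum_equiv ((flip_involutive e).toPerm) _ _ fun ω => ?_
    simp only [Function.Involutive.coe_toPerm]
    simp only [Function.update_self, hcflip, hg]
    rcases hωe : ω e with _ | _
    · simp [Function.update_self, hωe, hcflip, hg]
    · simp [Function.update_self, hωe, hcflip, hg]
  have h2 : ∑ ω : V → Bool, prodWeight p ω * g ω = T := by
    have : ∀ ω : V → Bool, prodWeight p ω * g ω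
        = (if ω e then c ω * g ω else 0) * p e
          + (if ω e then 0 else c ω * g ω) * (1 - p e) := by
      intro ω
      rw [hw ω]
      rcases ω e <;> simp <;> ring
    rw [Finset.sum_congr rfl fun ω _ => this ω, Finset.sum_add_distrib,
      ← Finset.sum_mul, ← Finset.sum_mul, h1]
    ring
  have h3 : ∀ ω : V → Bool, prodWeight p ω * ((if ω e then (1:ℝ) else 0) * g ω)
      = (if ω e then c ω * g ω else 0) * p e := by
    intro ω
    rw [hw ω]
    rcases ω e <;> simp <;> ring
  rw [Finset.sum_congr rfl fun ω _ => h3 ω, ← Finset.sum_mul, h1, h2]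
  ring

end Aux

/-- For a prefix-measurable probed-set map `Q` (membership of `e` in `Q ω` depends only
on coordinates strictly below `e`), the expected number of probed active elements equals
the expected sum of `p e` over probed elements. -/
theorem expected_active_probed {V : Type*} [Fintype V] [LinearOrder V]
    (p : V → ℝ) (hp0 : ∀ e, 0 ≤ p e) (hp1 : ∀ e, p e ≤ 1)
    (Q : (V → Bool) → Finset V)
    (hQ : ∀ (e : V) (ω ω' : V → Bool),
      (∀ f, f < e → ω f = ω' f) → (e ∈ Q ω ↔ e ∈ Q ω')) :
    ∑ ω : V → Bool, prodWeight p ω * (((Q ω).filter (fun e => ω e = true)).card : ℝ)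
      = ∑ ω : V → Bool, prodWeight p ω * ∑ e ∈ Q ω, p e := by
  classical
  -- rewrite both sides as double sums over `e ∈ univ`
  have hL : ∀ ω : V → Bool,
      (((Q ω).filter (fun e => ω e = true)).card : ℝ)
        = ∑ e : V, (if e ∈ Q ω then (if ω e then (1:ℝ) else 0) else 0) := by
    intro ω
    rw [Finset.card_filter]
    push_cast
    rw [Finset.sum_ite_mem, Finset.univ_inter]
  have hR : ∀ ω : V → Bool,
      (∑ e ∈ Q ω, p e) = ∑ e : V, (if e ∈ Q ω then p e else 0) := by
    intro ω
    rw [Finset.sum_ite_mem, Finset.univ_inter]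
  calc ∑ ω : V → Bool, prodWeight p ω * (((Q ω).filter (fun e => ω e = true)).card : ℝ)
      = ∑ ω : V → Bool, ∑ e : V,
          prodWeight p ω * ((if ω e then (1:ℝ) else 0) * (if e ∈ Q ω then (1:ℝ) else 0)) := by
        refine Finset.sum_congr rfl fun ω _ => ?_
        rw [hL ω, Finset.mul_sum]
        refine Finset.sum_congr rfl fun e _ => ?_
        rcases em (e ∈ Q ω) with h | h <;> rcases hωe : ω e <;> simp [h, hωe]
    _ = ∑ e : V, ∑ ω : V → Bool,
          prodWeight p ω * ((if ω e then (1:ℝ) else 0) * (if e ∈ Q ω then (1:ℝ) else 0)) :=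
        Finset.sum_comm
    _ = ∑ e : V, p e * ∑ ω : V → Bool,
          prodWeight p ω * (if e ∈ Q ω then (1:ℝ) else 0) := by
        refine Finset.sum_congr rfl fun e _ => ?_
        refine key_coord p e _ fun ω b => ?_
        have : e ∈ Q (Function.update ω e b) ↔ e ∈ Q ω :=
          hQ e _ _ fun f hf => Function.update_of_ne (ne_of_lt hf) _ _
        simp only [this]
    _ = ∑ ω : V → Bool, ∑ e : V,
          prodWeight p ω * (if e ∈ Q ω then p e else 0) := by
        rw [Finset.sum_comm]
        refine Finset.sum_congr rfl fun e _ => ?_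
        rw [Finset.mul_sum]
        refine Finset.sum_congr rfl fun ω _ => ?_
        rcases em (e ∈ Q ω) with h | h <;> simp [h] <;> ring
    _ = ∑ ω : V → Bool, prodWeight p ω * ∑ e ∈ Q ω, p e := by
        refine Finset.sum_congr rfl fun ω _ => ?_
        rw [hR ω, Finset.mul_sum]
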